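/- Let x̄₀ ∈ (0,1) satisfy φ(x̄₀) = x̄₀ and assume condition (cond0): f(x̄₀)g′(x̄₀) − f′(x̄₀)g(x̄₀) < −1. Then there exist x̄₁, x̄₂ with 0 < x̄₁ < x̄₀ < x̄₂ < 1 satisfying x̄₁ = g(x̄₂)f(x̄₁) and x̄₂ = g(x̄₁)f(x̄₂); that is, the two-cell periodic reduced system has a non-homogeneous stationary state. -/

import Mathlib

/-- The Hill-type function `f(x) = 1/(a + x^k)` of the reduced Hes1–Notch model. -/
noncomputable def fHill (a : ℝ) (k : ℕ) : ℝ → ℝ := fun x => 1 / (a + x ^ k)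

/-- The Hill-type function `g(x) = 1/(1 + b·x^h)` of the reduced Hes1–Notch model. -/
noncomputable def gHill (b : ℝ) (h : ℕ) : ℝ → ℝ := fun x => 1 / (1 + b * x ^ h)

open Set Filter

lemma phiStrictMono (a : ℝ) (ha : 0 < a) (k : ℕ) :
    StrictMono (fun x : ℝ => a * x + x * |x| ^ k) := by
  intro x y hxy
  have key : x * |x| ^ k ≤ y * |y| ^ k := by
    rcases le_or_gt 0 x with hx | hx
    · have hy : 0 ≤ y := le_trans hx hxy.le
      rw [abs_of_nonneg hx, abs_of_nonneg hy]
      exact mul_le_mul hxy.le (pow_le_pow_left₀ hx hxy.le k) (pow_nonneg hx k) hy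
    · rcases le_or_gt 0 y with hy | hy
      · have h1 : x * |x| ^ k ≤ 0 :=
          mul_nonpos_of_nonpos_of_nonneg hx.le (pow_nonneg (abs_nonneg x) k)
        have h2 : 0 ≤ y * |y| ^ k := mul_nonneg hy (pow_nonneg (abs_nonneg y) k)
        linarith
      · rw [abs_of_neg hx, abs_of_neg hy]
        have h1 : (-y) ^ k ≤ (-x) ^ k := pow_le_pow_left₀ (by linarith) (by linarith) k
        have h2 : (-y) * (-y) ^ k ≤ (-x) * (-x) ^ k :=
          mul_le_mul (by linarith) h1 (pow_nonneg (by linarith) k) (by linarith)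
        nlinarith [h2]
  have : a * x < a * y := by nlinarith
  dsimp only
  linarith

lemma phiContinuous (a : ℝ) (k : ℕ) :
    Continuous (fun x : ℝ => a * x + x * |x| ^ k) :=
  (continuous_const.mul continuous_id).add (continuous_id.mul (continuous_abs.pow k))

lemma phiTendstoTop (a : ℝ) (ha : 0 < a) (k : ℕ) :
    Tendsto (fun x : ℝ => a * x + x * |x| ^ k) atTop atTop := by
  apply tendsto_atTop_mono' _ _ tendsto_id
  filter_upwards [eventually_ge_atTop (1:ℝ)] with x hx
  have hx0 : (0:ℝ) ≤ x := by linarith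
  have habs : |x| = x := abs_of_nonneg hx0
  have hpow : (1:ℝ) ≤ |x| ^ k := one_le_pow₀ (by rw [habs]; exact hx)
  have : x * 1 ≤ x * |x| ^ k := mul_le_mul_of_nonneg_left hpow hx0
  simp only [id]
  nlinarith

lemma phiTendstoBot (a : ℝ) (ha : 0 < a) (k : ℕ) :
    Tendsto (fun x : ℝ => a * x + x * |x| ^ k) atBot atBot := by
  apply tendsto_atBot_mono' _ _ tendsto_id
  filter_upwards [eventually_le_atBot (-1:ℝ)] with x hx
  have hx0 : x ≤ 0 := by linarith
  have habs : |x| = -x := abs_of_nonpos hx0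
  have hpow : (1:ℝ) ≤ |x| ^ k := one_le_pow₀ (by rw [habs]; linarith)
  have h1 : x * |x| ^ k ≤ x * 1 := mul_le_mul_of_nonpos_left hpow hx0
  have h2 : a * x ≤ 0 := mul_nonpos_of_nonneg_of_nonpos ha.le hx0
  simp only [id]
  nlinarith

set_option maxHeartbeats 1000000 in
/-- Under condition (cond0), `f(x̄₀)g′(x̄₀) − f′(x̄₀)g(x̄₀) < −1`, there exists a
non-homogeneous stationary state `x̄₁ < x̄₀ < x̄₂` of the two-cell periodic reduced
Hes1–Notch system. -/
theorem nonhomogeneous_stationary_state_exists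
    (a b : ℝ) (ha : 0 < a) (hb : 0 < b) (k h : ℕ) (hk : 1 ≤ k) (hh : 1 ≤ h)
    (x0 : ℝ) (hx0 : x0 ∈ Set.Ioo (0 : ℝ) 1)
    (hfix : fHill a k x0 * gHill b h x0 = x0)
    (hcond : fHill a k x0 * deriv (gHill b h) x0 - deriv (fHill a k) x0 * gHill b h x0 < -1) :
    ∃ x1 x2 : ℝ, 0 < x1 ∧ x1 < x0 ∧ x0 < x2 ∧ x2 < 1 ∧
      x1 = gHill b h x2 * fHill a k x1 ∧ x2 = gHill b h x1 * fHill a k x2 := by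
  obtain ⟨hx0pos, hx0lt1⟩ := hx0
  set P : ℝ := a + x0 ^ k with hPdef
  set Q : ℝ := 1 + b * x0 ^ h with hQdef
  have hP : 0 < P := by have := pow_nonneg hx0pos.le k; positivity
  have hQ : 0 < Q := by have := pow_nonneg hx0pos.le h; positivity
  -- the extended production function Φ
  set Φ : ℝ → ℝ := fun x => a * x + x * |x| ^ k with hΦdef
  have hmono : StrictMono Φ := phiStrictMono a ha k
  have hsurj : Function.Surjective Φ :=
    (phiContinuous a k).surjective (phiTendstoTop a ha k) (phiTendstoBot a ha k)
  set e : ℝ ≃o ℝ := StrictMono.orderIsoOfSurjective Φ hmono hsurj with hedef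
  have hcoe : ∀ x, e x = Φ x := fun x => by
    rw [hedef, StrictMono.coe_orderIsoOfSurjective]
  have hleft : ∀ y, Φ (e.symm y) = y := fun y =>
    StrictMono.orderIsoOfSurjective_self_symm_apply Φ hmono hsurj y
  have hsymmΦ : ∀ x, e.symm (Φ x) = x := fun x =>
    StrictMono.orderIsoOfSurjective_symm_apply_self Φ hmono hsurj x
  have hsymm_mono : StrictMono (⇑e.symm) := e.symm.strictMono
  have hsymm_cont : Continuous (⇑e.symm) := OrderIso.continuous e.symm
  have hsymm0 : e.symm 0 = 0 := by
    have h0 : Φ 0 = 0 := by simp [hΦdef]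
    calc e.symm 0 = e.symm (Φ 0) := by rw [h0]
    _ = 0 := hsymmΦ 0
  -- the fixed point relation
  have hfHx0 : fHill a k x0 = 1 / P := rfl
  have hgHx0 : gHill b h x0 = 1 / Q := rfl
  have hQP : x0 * P * Q = 1 := by
    have h1 : (1 / P) * (1 / Q) = x0 := by rw [← hfHx0, ← hgHx0]; exact hfix
    field_simp at h1
    linarith
  have hΦx0 : Φ x0 = x0 * P := by
    rw [hΦdef]; simp only [abs_of_pos hx0pos, hPdef]; ring
  have hgΦ : gHill b h x0 = Φ x0 := by
    rw [hgHx0, hΦx0]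
    rw [eq_comm, eq_div_iff hQ.ne']
    linarith [hQP]
  -- derivatives of f and g at x0
  set D : ℝ := b * ((h : ℝ) * x0 ^ (h - 1)) with hDdef
  set E : ℝ := (k : ℝ) * x0 ^ (k - 1) with hEdef
  have hQd : HasDerivAt (fun x : ℝ => 1 + b * x ^ h) D x0 :=
    ((hasDerivAt_pow h x0).const_mul b).const_add 1
  have hPd : HasDerivAt (fun x : ℝ => a + x ^ k) E x0 :=
    (hasDerivAt_pow k x0).const_add a
  have hgd : HasDerivAt (gHill b h) ((0 * Q - 1 * D) / Q ^ 2) x0 :=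
    (hasDerivAt_const x0 1).div hQd hQ.ne'
  have hfd : HasDerivAt (fHill a k) ((0 * P - 1 * E) / P ^ 2) x0 :=
    (hasDerivAt_const x0 1).div hPd hP.ne'
  rw [hgd.deriv, hfd.deriv, hfHx0, hgHx0] at hcond
  -- key slope bound
  set DP : ℝ := a + ((k : ℝ) + 1) * x0 ^ k with hDPdef
  have hxE : E * x0 = (k : ℝ) * x0 ^ k := by
    rw [hEdef]
    have h9 : x0 ^ (k - 1) * x0 = x0 ^ k := by
      rw [← pow_succ]; congr 1; omega
    rw [mul_assoc, h9]
  have hDP : 0 < DP := by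
    have h0 : (0:ℝ) ≤ (k:ℝ) + 1 := by positivity
    have := pow_nonneg hx0pos.le k
    rw [hDPdef]; positivity
  have hgdval : (0 * Q - 1 * D) / Q ^ 2 = -(D * x0 ^ 2 * P ^ 2) := by
    rw [div_eq_iff (pow_ne_zero 2 hQ.ne')]
    linear_combination (D * (x0 * P * Q + 1)) * hQP
  have hineq : -(D * P) + E * Q < -(P ^ 2 * Q ^ 2) := by
    calc -(D * P) + E * Q
        = (1 / P * ((0 * Q - 1 * D) / Q ^ 2) - (0 * P - 1 * E) / P ^ 2 * (1 / Q)) * (P ^ 2 * Q ^ 2) := by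
          field_simp
          ring
      _ < -1 * (P ^ 2 * Q ^ 2) := mul_lt_mul_of_pos_right hcond (by positivity)
      _ = -(P ^ 2 * Q ^ 2) := by ring
  have h5 := mul_lt_mul_of_pos_right hineq (mul_pos hx0pos hQ)
  have hL : (-(D * P) + E * Q) * (x0 * Q) = -D + (k : ℝ) * x0 ^ k * Q ^ 2 := by
    linear_combination (-D) * hQP + Q ^ 2 * hxE
  have hR : -(P ^ 2 * Q ^ 2) * (x0 * Q) = -(P * Q ^ 2) := by
    linear_combination (-(P * Q ^ 2)) * hQP
  rw [hL, hR] at h5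
  have hP2 : P * Q ^ 2 = a * Q ^ 2 + x0 ^ k * Q ^ 2 := by rw [hPdef]; ring
  have hkey' : Q ^ 2 * DP < D := by
    rw [hDPdef]; linarith only [h5, hP2]
  have hkey : DP < D * x0 ^ 2 * P ^ 2 := by
    have h7 := mul_lt_mul_of_pos_right hkey' (by positivity : (0:ℝ) < x0 ^ 2 * P ^ 2)
    have hL2 : Q ^ 2 * DP * (x0 ^ 2 * P ^ 2) = DP := by
      linear_combination (DP * (x0 * P * Q + 1)) * hQP
    rw [hL2] at h7
    linarith only [h7]
  -- derivative of Φ at x0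
  have hpoly : HasDerivAt (fun x : ℝ => a * x + x ^ (k + 1)) DP x0 := by
    have h1 : HasDerivAt (fun x : ℝ => a * x) (a * 1) x0 := (hasDerivAt_id x0).const_mul a
    have h3 := h1.add (hasDerivAt_pow (k + 1) x0)
    have h4 : DP = a * 1 + ((k + 1 : ℕ) : ℝ) * x0 ^ (k + 1 - 1) := by
      rw [hDPdef]
      push_cast
      simp
    rw [h4]; exact h3
  have hΦev : Φ =ᶠ[nhds x0] (fun x : ℝ => a * x + x ^ (k + 1)) := by
    filter_upwards [Ioi_mem_nhds hx0pos] with x hx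
    rw [hΦdef]
    simp only
    rw [abs_of_pos hx]
    ring
  have hΦd : HasDerivAt Φ DP x0 := hpoly.congr_of_eventuallyEq hΦev
  have hΦd' : HasDerivAt Φ DP (e.symm (Φ x0)) := by rw [hsymmΦ x0]; exact hΦd
  have hinv : HasDerivAt (⇑e.symm) DP⁻¹ (Φ x0) :=
    HasDerivAt.of_local_left_inverse hsymm_cont.continuousAt hΦd' hDP.ne'
      (Filter.Eventually.of_forall hleft)
  have hinv' : HasDerivAt (⇑e.symm) DP⁻¹ (gHill b h x0) := by rw [hgΦ]; exact hinv
  set F : ℝ → ℝ := fun w => e.symm (gHill b h w) with hFdef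
  set s : ℝ := DP⁻¹ * ((0 * Q - 1 * D) / Q ^ 2) with hsdef
  have hFd : HasDerivAt F s x0 := hinv'.comp x0 hgd
  have hs : s < -1 := by
    rw [hsdef, hgdval]
    have hlt := mul_lt_mul_of_pos_left hkey (inv_pos.mpr hDP)
    rw [inv_mul_cancel₀ hDP.ne'] at hlt
    linarith only [hlt]
  have hFx0 : F x0 = x0 := by rw [hFdef]; simp only; rw [hgΦ, hsymmΦ]
  have hFd2 : HasDerivAt F s (F x0) := by rw [hFx0]; exact hFd
  have hGd : HasDerivAt (fun w => F (F w) - w) (s * s - 1) x0 :=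
    (hFd2.comp x0 hFd).sub (hasDerivAt_id x0)
  have hss : 0 < s * s - 1 := by
    have h1 : (1:ℝ) < -s := by linarith only [hs]
    have h2 : (1:ℝ) * 1 < (-s) * (-s) := mul_lt_mul'' h1 h1 zero_le_one zero_le_one
    nlinarith only [h2]
  have hslope := hasDerivAt_iff_tendsto_slope.mp hGd
  have hev : ∀ᶠ w in nhdsWithin x0 {x0}ᶜ, 0 < slope (fun w => F (F w) - w) x0 w :=
    hslope.eventually (eventually_gt_nhds hss)
  have hev2 : ∀ᶠ w in nhdsWithin x0 (Iio x0), 0 < slope (fun w => F (F w) - w) x0 w :=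
    hev.filter_mono (nhdsWithin_mono x0 (fun w hw => ne_of_lt hw))
  have hev3 : ∀ᶠ w in nhdsWithin x0 (Iio x0), w ∈ Ioo (0:ℝ) x0 :=
    eventually_of_mem (Ioo_mem_nhdsLT_of_mem ⟨hx0pos, le_refl x0⟩) (fun w hw => hw)
  obtain ⟨y, hy1, hy2⟩ := (hev2.and hev3).exists
  have hGy : F (F y) - y < 0 := by
    rw [slope_def_field] at hy1
    have hnum : F (F x0) - x0 = 0 := by rw [hFx0, hFx0]; ring
    rw [hnum, sub_zero] at hy1
    by_contra hcon
    push_neg at hcon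
    have hden : y - x0 < 0 := by linarith [hy2.2]
    have := div_nonpos_of_nonneg_of_nonpos hcon hden.le
    linarith
  -- a positive lower bound for F ∘ F on [0, x0]
  set C : ℝ := e.symm 1 with hCdef
  have hC : 0 < C := by rw [hCdef, ← hsymm0]; exact hsymm_mono (by norm_num)
  have hdenC : (0:ℝ) < 1 + b * C ^ h := by positivity
  set m : ℝ := e.symm (1 / (1 + b * C ^ h)) with hmdef
  have hm : 0 < m := by rw [hmdef, ← hsymm0]; exact hsymm_mono (by positivity)
  have hgpos : ∀ w : ℝ, 0 ≤ w → 0 < gHill b h w := by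
    intro w hw
    have h1 : (0:ℝ) < 1 + b * w ^ h :=
      add_pos_of_pos_of_nonneg one_pos (mul_nonneg hb.le (pow_nonneg hw h))
    exact div_pos one_pos h1
  have hgle : ∀ w : ℝ, 0 ≤ w → gHill b h w ≤ 1 := by
    intro w hw
    have h1 : (1:ℝ) ≤ 1 + b * w ^ h :=
      le_add_of_nonneg_right (mul_nonneg hb.le (pow_nonneg hw h))
    rw [gHill]
    rw [div_le_one (by linarith)]
    exact h1
  have hFpos : ∀ w : ℝ, 0 ≤ w → 0 < F w := by
    intro w hw
    rw [hFdef, ← hsymm0]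
    exact hsymm_mono (hgpos w hw)
  have hFleC : ∀ w : ℝ, 0 ≤ w → F w ≤ C := by
    intro w hw
    rw [hFdef, hCdef]
    exact e.symm.monotone (hgle w hw)
  have hFFm : ∀ w : ℝ, 0 ≤ w → m ≤ F (F w) := by
    intro w hw
    have ht := hFpos w hw
    have htC := hFleC w hw
    have hglb : 1 / (1 + b * C ^ h) ≤ gHill b h (F w) := by
      have hpow : (F w) ^ h ≤ C ^ h := pow_le_pow_left₀ ht.le htC h
      have hd1 : 0 < 1 + b * (F w) ^ h :=
        add_pos_of_pos_of_nonneg one_pos (mul_nonneg hb.le (pow_nonneg ht.le h))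
      exact one_div_le_one_div_of_le hd1
        (by linarith [mul_le_mul_of_nonneg_left hpow hb.le])
    calc m = e.symm (1 / (1 + b * C ^ h)) := hmdef
    _ ≤ e.symm (gHill b h (F w)) := e.symm.monotone hglb
    _ = F (F w) := by rw [hFdef]
  -- pick the left endpoint and apply the IVT
  set z : ℝ := min y m / 2 with hzdef
  have hz0 : 0 < z := by rw [hzdef]; exact div_pos (lt_min hy2.1 hm) two_pos
  have hzy : z < y := by
    have h1 : min y m ≤ y := min_le_left _ _
    rw [hzdef]; rcases hy2 with ⟨hy0, _⟩; linarith
  have hzm : z ≤ m / 2 := by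
    have := min_le_right y m
    rw [hzdef]; linarith
  have hGz : 0 < F (F z) - z := by
    have := hFFm z hz0.le
    linarith
  have hgcont : ContinuousOn (gHill b h) (Ici 0) := by
    apply ContinuousOn.div continuousOn_const
      ((continuous_const.add (continuous_const.mul (continuous_pow h))).continuousOn)
    intro w hw
    have hw0 : (0:ℝ) ≤ w := hw
    exact ne_of_gt (add_pos_of_pos_of_nonneg one_pos (mul_nonneg hb.le (pow_nonneg hw0 h)))
  have hFcont : ContinuousOn F (Ici 0) := hsymm_cont.comp_continuousOn hgcont
  have hFmaps : Set.MapsTo F (Ici 0) (Ici 0) := fun w hw => (hFpos w hw).le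
  have hFFcont : ContinuousOn (fun w => F (F w)) (Ici 0) := hFcont.comp hFcont hFmaps
  have hsub : Icc z y ⊆ Ici 0 := fun w hw => le_trans hz0.le hw.1
  have hGcont : ContinuousOn (fun w => F (F w) - w) (Icc z y) :=
    (hFFcont.mono hsub).sub continuousOn_id
  obtain ⟨x1, hx1mem, hGx1⟩ : ∃ x1 ∈ Icc z y, F (F x1) - x1 = 0 := by
    have hivt := intermediate_value_Icc' hzy.le hGcont
    obtain ⟨x1, hx1, hx1e⟩ := hivt ⟨hGy.le, hGz.le⟩
    exact ⟨x1, hx1, hx1e⟩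
  have hx1pos : 0 < x1 := lt_of_lt_of_le hz0 hx1mem.1
  have hx1lt : x1 < x0 := lt_of_le_of_lt hx1mem.2 hy2.2
  have hFFx1 : F (F x1) = x1 := by linarith only [hGx1]
  set x2 : ℝ := F x1 with hx2def
  have hgmono : gHill b h x0 < gHill b h x1 := by
    have hpow : x1 ^ h < x0 ^ h := pow_lt_pow_left₀ hx1lt hx1pos.le (by omega)
    have hd1 : 0 < 1 + b * x1 ^ h :=
      add_pos_of_pos_of_nonneg one_pos (mul_nonneg hb.le (pow_nonneg hx1pos.le h))
    exact one_div_lt_one_div_of_lt hd1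
      (by linarith [mul_lt_mul_of_pos_left hpow hb])
  have hx2gt : x0 < x2 := by
    rw [hx2def, hFdef]
    calc x0 = e.symm (gHill b h x0) := by rw [hgΦ, hsymmΦ]
    _ < e.symm (gHill b h x1) := hsymm_mono hgmono
  have hx2pos : 0 < x2 := lt_trans hx0pos hx2gt
  have hΦx2 : Φ x2 = gHill b h x1 := by rw [hx2def, hFdef]; exact hleft _
  have hgx1lt1 : gHill b h x1 < 1 := by
    have h1 : (1:ℝ) < 1 + b * x1 ^ h :=
      lt_add_of_pos_right 1 (mul_pos hb (pow_pos hx1pos h))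
    rw [gHill]
    rw [div_lt_one (by linarith)]
    exact h1
  have hx2lt1 : x2 < 1 := by
    have hΦ1 : Φ 1 = a + 1 := by rw [hΦdef]; simp
    have hlt : Φ x2 < Φ 1 := by rw [hΦx2, hΦ1]; linarith
    exact hmono.lt_iff_lt.mp hlt
  have hq2 : x2 = gHill b h x1 * fHill a k x2 := by
    have hPk : (0:ℝ) < a + x2 ^ k := add_pos ha (pow_pos hx2pos k)
    have hΦv : Φ x2 = x2 * (a + x2 ^ k) := by
      rw [hΦdef]; simp only; rw [abs_of_pos hx2pos]; ring
    rw [← hΦx2, hΦv, fHill]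
    field_simp
  have h9 : e.symm (gHill b h x2) = x1 := by
    rw [hx2def, hFdef]
    exact hFFx1
  have hΦx1 : gHill b h x2 = Φ x1 := by
    calc gHill b h x2 = Φ (e.symm (gHill b h x2)) := (hleft _).symm
    _ = Φ x1 := by rw [h9]
  have hq1 : x1 = gHill b h x2 * fHill a k x1 := by
    have hPk : (0:ℝ) < a + x1 ^ k := add_pos ha (pow_pos hx1pos k)
    have hΦv : Φ x1 = x1 * (a + x1 ^ k) := by
      rw [hΦdef]; simp only; rw [abs_of_pos hx1pos]; ring
    rw [hΦx1, hΦv, fHill]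
    field_simp
  exact ⟨x1, x2, hx1pos, hx1lt, hx2gt, hx2lt1, hq1, hq2⟩
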